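/- Fix a real x with −1 < x < 1, x ≠ 0. The function h ↦ log( x · sinh(h/2) / sinh(hx/2) ) (extended by continuity at h = 0 with value 0, i.e. equal to φ(h) − φ(hx) with φ(h) = log(sinh(h/2)/(h/2))) is even, strictly convex on ℝ, and strictly positive for h ≠ 0. -/

import Mathlib

open Real Set


/-- `φ(u) = log(sinh(u/2)/(u/2))`, extended by `φ(0) = 0`. -/
noncomputable def phi (u : ℝ) : ℝ :=
  if u = 0 then 0 else Real.log (Real.sinh (u / 2) / (u / 2))

lemma phi_even (u : ℝ) : phi (-u) = phi u := by
  unfold phi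
  rcases eq_or_ne u 0 with rfl | hu
  · simp
  · rw [if_neg (neg_ne_zero.2 hu), if_neg hu, neg_div, Real.sinh_neg, neg_div_neg_eq]

lemma phi_abs (u : ℝ) : phi u = phi |u| := by
  rcases le_or_gt 0 u with h | h
  · rw [abs_of_nonneg h]
  · rw [abs_of_neg h, phi_even]

lemma ratio_abs (t : ℝ) : Real.sinh t / t = Real.sinh |t| / |t| := by
  rcases le_or_gt 0 t with h | h
  · rw [abs_of_nonneg h]
  · rw [abs_of_neg h, Real.sinh_neg, neg_div_neg_eq]

lemma one_le_ratio {t : ℝ} (ht : t ≠ 0) : 1 ≤ Real.sinh t / t := by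
  rw [ratio_abs]
  have h : 0 < |t| := abs_pos.2 ht
  rw [le_div_iff₀ h]
  simpa using (Real.self_lt_sinh_iff.2 h).le

lemma phi_nonneg (u : ℝ) : 0 ≤ phi u := by
  unfold phi
  rcases eq_or_ne u 0 with rfl | hu
  · simp
  · rw [if_neg hu]
    exact Real.log_nonneg (one_le_ratio (by simpa using hu))

lemma sinh_le_mul_cosh {t : ℝ} (ht : 0 ≤ t) : Real.sinh t ≤ t * Real.cosh t := by
  have hd : ∀ u : ℝ, HasDerivAt (fun t : ℝ => t * Real.cosh t - Real.sinh t)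
      (u * Real.sinh u) u := by
    intro u
    have h1 : HasDerivAt (fun t : ℝ => t * Real.cosh t - Real.sinh t)
        (1 * Real.cosh u + u * Real.sinh u - Real.cosh u) u :=
      ((hasDerivAt_id u).mul (Real.hasDerivAt_cosh u)).sub (Real.hasDerivAt_sinh u)
    simpa using h1.congr_deriv (by ring)
  have hmono : MonotoneOn (fun t => t * Real.cosh t - Real.sinh t) (Ici (0:ℝ)) := by
    apply monotoneOn_of_deriv_nonneg (convex_Ici 0)
    · exact ((continuous_id.mul Real.continuous_cosh).sub Real.continuous_sinh).continuousOn
    · intro u _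
      exact (hd u).differentiableAt.differentiableWithinAt
    · intro u hu
      rw [interior_Ici, mem_Ioi] at hu
      rw [(hd u).deriv]
      exact mul_nonneg hu.le (Real.sinh_nonneg_iff.2 hu.le)
  have := hmono self_mem_Ici (mem_Ici.2 ht) ht
  simpa using this

lemma ratio_le_cosh {t : ℝ} (ht : t ≠ 0) : Real.sinh t / t ≤ Real.cosh t := by
  rw [ratio_abs, ← Real.cosh_abs]
  have h : 0 < |t| := abs_pos.2 ht
  rw [div_le_iff₀ h]
  have := sinh_le_mul_cosh h.le
  linarith

lemma phi_le (u : ℝ) : phi u ≤ Real.log (Real.cosh (u / 2)) := by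
  unfold phi
  rcases eq_or_ne u 0 with rfl | hu
  · simp
  · rw [if_neg hu]
    have h2 : (u:ℝ)/2 ≠ 0 := by simpa using hu
    exact Real.log_le_log (lt_of_lt_of_le one_pos (one_le_ratio h2)) (ratio_le_cosh h2)

lemma continuous_phi : Continuous phi := by
  rw [continuous_iff_continuousAt]
  intro u
  rcases eq_or_ne u 0 with rfl | hu
  · have hc : Filter.Tendsto (fun u : ℝ => Real.log (Real.cosh (u / 2))) (nhds 0) (nhds 0) := by
      have : ContinuousAt (fun u : ℝ => Real.log (Real.cosh (u / 2))) 0 := by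
        apply ContinuousAt.log
        · exact (Real.continuous_cosh.comp (continuous_id.div_const 2)).continuousAt
        · positivity
      simpa using this.tendsto
    have h0 : phi 0 = 0 := by simp [phi]
    rw [ContinuousAt, h0]
    exact tendsto_of_tendsto_of_tendsto_of_le_of_le tendsto_const_nhds hc
      (fun v => phi_nonneg v) (fun v => phi_le v)
  · have hev : (fun v => Real.log (Real.sinh (v / 2) / (v / 2))) =ᶠ[nhds u] phi := by
      filter_upwards [isOpen_ne.mem_nhds hu] with v hv
      simp [phi, hv]
    apply ContinuousAt.congr _ hev
    have h2 : (u:ℝ)/2 ≠ 0 := by simpa using hu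
    have hpos : 0 < Real.sinh (u / 2) / (u / 2) :=
      lt_of_lt_of_le one_pos (one_le_ratio h2)
    have hq : ContinuousAt (fun v : ℝ => Real.sinh (v/2) / (v/2)) u :=
      ((Real.continuous_sinh.comp (continuous_id.div_const 2)).continuousAt).div
        ((continuous_id.div_const 2).continuousAt) h2
    exact ContinuousAt.log hq hpos.ne'


lemma strictConvexOn_sinh' : StrictConvexOn ℝ (Ici (0:ℝ)) Real.sinh := by
  apply strictConvexOn_of_deriv2_pos (convex_Ici 0) Real.continuous_sinh.continuousOn
  intro t ht
  rw [interior_Ici, mem_Ioi] at ht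
  have : deriv^[2] Real.sinh = Real.sinh := by
    ext u
    simp [Function.iterate_succ, Real.deriv_sinh, Real.deriv_cosh]
  rw [this]
  exact Real.sinh_pos_iff.2 ht

/-- `sinh s / s < sinh t / t` for `0 < s < t`. -/
lemma sinh_ratio_lt {s t : ℝ} (hs : 0 < s) (hst : s < t) :
    Real.sinh s / s < Real.sinh t / t := by
  have ht : 0 < t := hs.trans hst
  have h1 : (0:ℝ) < 1 - s/t := by
    have : s / t < 1 := (div_lt_one ht).2 hst
    linarith
  have key : Real.sinh s < (s / t) * Real.sinh t := by
    have h := strictConvexOn_sinh'.2 (self_mem_Ici (a := (0:ℝ))) (mem_Ici.2 ht.le)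
      ht.ne h1 (by positivity : (0:ℝ) < s/t) (by ring)
    have he : s / t * t = s := div_mul_cancel₀ s ht.ne'
    simpa [Real.sinh_zero, he] using h
  rw [div_lt_div_iff₀ hs ht]
  have hts : 0 < Real.sinh t := Real.sinh_pos_iff.2 ht
  calc Real.sinh s * t < (s/t) * Real.sinh t * t := by nlinarith
    _ = Real.sinh t * s := by field_simp

noncomputable def phi2 (u : ℝ) : ℝ := Real.log (Real.sinh (u / 2)) - Real.log (u / 2)

noncomputable def psi (u : ℝ) : ℝ := Real.cosh (u/2) / Real.sinh (u/2) / 2 - 1/u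

noncomputable def psi' (u : ℝ) : ℝ := 1/u^2 - (1/4) / Real.sinh (u/2)^2

lemma sinh_ne_zero' {t : ℝ} (h : t ≠ 0) : Real.sinh t ≠ 0 := by
  rcases h.lt_or_gt with h | h
  · exact (Real.sinh_neg_iff.2 h).ne
  · exact (Real.sinh_pos_iff.2 h).ne'

lemma phi_eq_phi2 {u : ℝ} (hu : u ≠ 0) : phi u = phi2 u := by
  have h2 : u/2 ≠ 0 := by simpa using hu
  rw [phi, if_neg hu, phi2, Real.log_div (sinh_ne_zero' h2) h2]

lemma hasDerivAt_phi2 {u : ℝ} (hu : u ≠ 0) : HasDerivAt phi2 (psi u) u := by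
  have h2 : u/2 ≠ 0 := by simpa using hu
  have hs : Real.sinh (u/2) ≠ 0 := sinh_ne_zero' h2
  have hinner : HasDerivAt (fun v : ℝ => Real.sinh (v/2)) (Real.cosh (u/2) * (1/2)) u := by
    exact (Real.hasDerivAt_sinh (u/2)).comp u ((hasDerivAt_id u).div_const 2)
  have hA : HasDerivAt (fun v : ℝ => Real.log (Real.sinh (v/2)))
      (Real.cosh (u/2) * (1/2) / Real.sinh (u/2)) u := hinner.log hs
  have hB : HasDerivAt (fun v : ℝ => Real.log (v/2)) ((1/2) / (u/2)) u :=
    HasDerivAt.log ((hasDerivAt_id u).div_const 2) h2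
  have := hA.sub hB
  refine this.congr_deriv ?_
  unfold psi
  field_simp

lemma hasDerivAt_psi {u : ℝ} (hu : u ≠ 0) : HasDerivAt psi (psi' u) u := by
  have h2 : u/2 ≠ 0 := by simpa using hu
  have hs : Real.sinh (u/2) ≠ 0 := sinh_ne_zero' h2
  have hcosh : HasDerivAt (fun v : ℝ => Real.cosh (v/2)) (Real.sinh (u/2) * (1/2)) u :=
    by exact (Real.hasDerivAt_cosh (u/2)).comp u ((hasDerivAt_id u).div_const 2)
  have hsinh : HasDerivAt (fun v : ℝ => Real.sinh (v/2)) (Real.cosh (u/2) * (1/2)) u :=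
    by exact (Real.hasDerivAt_sinh (u/2)).comp u ((hasDerivAt_id u).div_const 2)
  have hdiv : HasDerivAt (fun v : ℝ => Real.cosh (v/2) / Real.sinh (v/2))
      ((Real.sinh (u/2) * (1/2) * Real.sinh (u/2) -
        Real.cosh (u/2) * (Real.cosh (u/2) * (1/2))) / Real.sinh (u/2)^2) u :=
    hcosh.div hsinh hs
  have hinv : HasDerivAt (fun v : ℝ => 1/v) (-(1/u^2)) u := by
    simpa [one_div] using hasDerivAt_inv hu
  have := (hdiv.div_const 2).sub hinv
  refine this.congr_deriv ?_
  unfold psi'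
  rw [show Real.cosh (u/2) * (Real.cosh (u/2) * (1/2)) = (Real.cosh (u/2)^2) * (1/2) by ring,
    Real.cosh_sq (u/2)]
  field_simp
  ring
section Fixed
variable {x : ℝ}

lemma hasDerivAt_f (hx0 : x ≠ 0) {h : ℝ} (hh : h ≠ 0) :
    HasDerivAt (fun h : ℝ => phi h - phi (h * x)) (psi h - x * psi (h * x)) h := by
  have hhx : h * x ≠ 0 := mul_ne_zero hh hx0
  have hg : HasDerivAt (fun h : ℝ => phi2 h - phi2 (h * x)) (psi h - x * psi (h * x)) h := by
    have h1 : HasDerivAt phi2 (psi h) h := hasDerivAt_phi2 hh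
    have h2 : HasDerivAt (fun h : ℝ => phi2 (h * x)) (psi (h * x) * x) h :=
      by exact (hasDerivAt_phi2 hhx).comp h (hasDerivAt_mul_const x)
    have := h1.sub h2
    refine this.congr_deriv ?_
    ring
  apply hg.congr_of_eventuallyEq
  filter_upwards [isOpen_ne.mem_nhds hh] with v hv
  rw [phi_eq_phi2 hv, phi_eq_phi2 (mul_ne_zero hv hx0)]

lemma hasDerivAt_G (hx0 : x ≠ 0) {h : ℝ} (hh : h ≠ 0) :
    HasDerivAt (fun h : ℝ => psi h - x * psi (h * x)) (psi' h - x ^ 2 * psi' (h * x)) h := by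
  have hhx : h * x ≠ 0 := mul_ne_zero hh hx0
  have h1 : HasDerivAt psi (psi' h) h := hasDerivAt_psi hh
  have h2 : HasDerivAt (fun h : ℝ => psi (h * x)) (psi' (h * x) * x) h :=
    by exact (hasDerivAt_psi hhx).comp h (hasDerivAt_mul_const x)
  have := h1.sub (h2.const_mul x)
  refine this.congr_deriv ?_
  ring

lemma deriv2_pos (hx1 : -1 < x) (hx2 : x < 1) (hx0 : x ≠ 0) {h : ℝ} (hh : 0 < h) :
    0 < psi' h - x ^ 2 * psi' (h * x) := by
  have hxabs : 0 < |x| := abs_pos.2 hx0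
  have hxlt : |x| < 1 := abs_lt.2 ⟨hx1, hx2⟩
  set s := |x| * h / 2 with hs_def
  set t := h / 2 with ht_def
  have hs : 0 < s := by positivity
  have hst : s < t := by
    rw [hs_def, ht_def]
    have : |x| * h < h := by nlinarith
    linarith
  have ht : 0 < t := hs.trans hst
  have hratio := sinh_ratio_lt hs hst
  have hsinh_t : 0 < Real.sinh t := Real.sinh_pos_iff.2 ht
  have hsinh_s : 0 < Real.sinh s := Real.sinh_pos_iff.2 hs
  have hkey : Real.sinh s < |x| * Real.sinh t := by
    rw [div_lt_div_iff₀ hs ht] at hratio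
    have : Real.sinh s * t < Real.sinh t * (|x| * t) := by
      calc Real.sinh s * t < Real.sinh t * s := hratio
        _ = Real.sinh t * (|x| * t) := by rw [hs_def, ht_def]; ring
    nlinarith
  have habs : Real.sinh (h * x / 2) ^ 2 = Real.sinh s ^ 2 := by
    have he : |h * x / 2| = s := by
      rw [hs_def, abs_div, abs_mul, abs_of_pos hh, abs_two]
      ring
    have : |Real.sinh (h * x / 2)| = Real.sinh s := by
      rw [Real.abs_sinh, he]
    rw [← sq_abs, this]
  have hsq : Real.sinh (h * x / 2) ^ 2 < x ^ 2 * Real.sinh t ^ 2 := by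
    rw [habs]
    have h2 : Real.sinh s ^ 2 < (|x| * Real.sinh t) ^ 2 := by
      apply sq_lt_sq' _ hkey
      nlinarith
    calc Real.sinh s ^ 2 < (|x| * Real.sinh t) ^ 2 := h2
      _ = x ^ 2 * Real.sinh t ^ 2 := by rw [mul_pow, sq_abs]
  have hhx : h * x ≠ 0 := mul_ne_zero hh.ne' hx0
  have hsinh_hx : Real.sinh (h * x / 2) ≠ 0 := sinh_ne_zero' (by simpa using hhx)
  have hsinh_t' : Real.sinh t ≠ 0 := hsinh_t.ne'
  have heq : psi' h - x ^ 2 * psi' (h * x) =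
      (x ^ 2 * Real.sinh t ^ 2 - Real.sinh (h * x / 2) ^ 2) /
        (4 * Real.sinh t ^ 2 * Real.sinh (h * x / 2) ^ 2) := by
    unfold psi'
    rw [← ht_def]
    field_simp
    ring
  rw [heq]
  exact div_pos (by linarith) (by positivity)

lemma f_strictConvexOn_Ici (hx1 : -1 < x) (hx2 : x < 1) (hx0 : x ≠ 0) :
    StrictConvexOn ℝ (Ici (0:ℝ)) (fun h : ℝ => phi h - phi (h * x)) := by
  apply strictConvexOn_of_deriv2_pos (convex_Ici 0)
  · exact (continuous_phi.sub (continuous_phi.comp (continuous_id.mul continuous_const))).continuousOn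
  · intro h hh
    rw [interior_Ici, mem_Ioi] at hh
    have hderiv : deriv (fun h : ℝ => phi h - phi (h * x)) =ᶠ[nhds h]
        (fun h : ℝ => psi h - x * psi (h * x)) := by
      filter_upwards [isOpen_ne.mem_nhds hh.ne'] with v hv
      exact (hasDerivAt_f hx0 hv).deriv
    have heq2 : deriv^[2] (fun h : ℝ => phi h - phi (h * x)) h =
        deriv (fun h : ℝ => psi h - x * psi (h * x)) h := by
      show deriv (deriv _) h = _
      exact Filter.EventuallyEq.deriv_eq hderiv
    rw [heq2, (hasDerivAt_G hx0 hh.ne').deriv]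
    exact deriv2_pos hx1 hx2 hx0 hh


lemma f_pos (hx1 : -1 < x) (hx2 : x < 1) (hx0 : x ≠ 0) {h : ℝ} (hh : h ≠ 0) :
    0 < phi h - phi (h * x) := by
  have ha : 0 < |h| := abs_pos.2 hh
  have hb : 0 < |h * x| := abs_pos.2 (mul_ne_zero hh hx0)
  have hxlt : |x| < 1 := abs_lt.2 ⟨hx1, hx2⟩
  have hlt : |h * x| < |h| := by
    rw [abs_mul]
    nlinarith
  rw [sub_pos, phi_abs h, phi_abs (h * x)]
  unfold phi
  rw [if_neg ha.ne', if_neg hb.ne']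
  have hs : 0 < |h * x| / 2 := by positivity
  have hst : |h * x| / 2 < |h| / 2 := by linarith
  exact Real.log_lt_log
    (lt_of_lt_of_le one_pos (one_le_ratio hs.ne')) (sinh_ratio_lt hs hst)

lemma f_zero : phi (0:ℝ) - phi (0 * x) = 0 := by simp [phi]

lemma f_strictMonoOn (hx1 : -1 < x) (hx2 : x < 1) (hx0 : x ≠ 0) :
    StrictMonoOn (fun h : ℝ => phi h - phi (h * x)) (Ici (0:ℝ)) := by
  intro p hp q _ hpq
  rw [mem_Ici] at hp
  have hq : 0 < q := lt_of_le_of_lt hp hpq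
  have hfq : 0 < phi q - phi (q * x) := f_pos hx1 hx2 hx0 hq.ne'
  rcases eq_or_lt_of_le hp with rfl | hp0
  · simpa [phi] using hfq
  · have hpq1 : p / q < 1 := (div_lt_one hq).2 hpq
    have hpq0 : 0 < p / q := by positivity
    have := (f_strictConvexOn_Ici hx1 hx2 hx0).2 (self_mem_Ici (a := (0:ℝ)))
      (mem_Ici.2 hq.le) hq.ne (by linarith : (0:ℝ) < 1 - p/q) hpq0 (by ring)
    have he : (1 - p/q) • (0:ℝ) + (p/q) • q = p := by
      simp [smul_eq_mul]
      field_simp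
    rw [he] at this
    simp only [smul_eq_mul, f_zero (x := x), mul_zero, zero_add] at this
    calc phi p - phi (p * x) < p/q * (phi q - phi (q * x)) := by simpa using this
      _ ≤ phi q - phi (q * x) := by nlinarith

lemma f_abs (u : ℝ) : phi u - phi (u * x) = phi |u| - phi (|u| * x) := by
  rcases le_or_gt 0 u with h | h
  · rw [abs_of_nonneg h]
  · rw [abs_of_neg h, phi_even, neg_mul, phi_even]

end Fixed


/-- For fixed `x ∈ (-1,1)`, `x ≠ 0`, the function
`h ↦ log(x sinh(h/2)/sinh(hx/2)) = φ(h) - φ(hx)` is even, strictly convex on `ℝ`,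
and strictly positive for `h ≠ 0`. -/
theorem phi_diff_even_strictConvex_pos (x : ℝ) (hx1 : -1 < x) (hx2 : x < 1) (hx0 : x ≠ 0) :
    (∀ h : ℝ, phi (-h) - phi (-h * x) = phi h - phi (h * x)) ∧
    StrictConvexOn ℝ Set.univ (fun h : ℝ => phi h - phi (h * x)) ∧
    (∀ h : ℝ, h ≠ 0 → 0 < phi h - phi (h * x)) := by
  refine ⟨fun h => by rw [phi_even, neg_mul, phi_even], ?_, fun h hh => f_pos hx1 hx2 hx0 hh⟩
  set f : ℝ → ℝ := fun h : ℝ => phi h - phi (h * x) with hf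
  have fabs : ∀ u : ℝ, f u = f |u| := fun u => f_abs (x := x) u
  have SC := f_strictConvexOn_Ici hx1 hx2 hx0
  have SM := f_strictMonoOn hx1 hx2 hx0
  have MO := SM.monotoneOn
  refine ⟨convex_univ, fun p _ q _ hpq a b ha hb hab => ?_⟩
  simp only [smul_eq_mul]
  show f (a * p + b * q) < a * f p + b * f q
  have habs_c : |a * p + b * q| ≤ a * |p| + b * |q| := by
    calc |a * p + b * q| ≤ |a * p| + |b * q| := abs_add_le _ _
      _ = a * |p| + b * |q| := by rw [abs_mul, abs_mul, abs_of_pos ha, abs_of_pos hb]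
  rcases eq_or_ne |p| |q| with he | hne
  · -- p = -q (or p = q, excluded), q ≠ 0
    rcases abs_eq_abs.1 he with rfl | rfl
    · exact absurd rfl hpq
    · have hq : q ≠ 0 := by rintro rfl; simp at hpq
      have h1 : f (a * -q + b * q) = f (|b - a| * |q|) := by
        rw [show a * -q + b * q = (b - a) * q from by ring, fabs ((b - a) * q), abs_mul]
      have h2 : |b - a| * |q| < |q| := by
        have hba : |b - a| < 1 := by rw [abs_lt]; constructor <;> linarith
        have := abs_pos.2 hq
        nlinarith
      have h3 : f (|b - a| * |q|) < f |q| :=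
        SM (mem_Ici.2 (by positivity)) (mem_Ici.2 (abs_nonneg q)) h2
      have h4 : f (-q) = f q := by
        rw [fabs (-q), fabs q, abs_neg]
      have h5 : a * f q + b * f q = f q := by rw [← add_mul, hab, one_mul]
      calc f (a * -q + b * q) = f (|b - a| * |q|) := h1
        _ < f |q| := h3
        _ = f q := (fabs q).symm
        _ = a * f q + b * f q := h5.symm
        _ = a * f (-q) + b * f q := by rw [h4]
  · have h1 : f (a * p + b * q) = f |a * p + b * q| := fabs _
    have h2 : f |a * p + b * q| ≤ f (a * |p| + b * |q|) :=
      MO (mem_Ici.2 (abs_nonneg _)) (mem_Ici.2 (by positivity)) habs_c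
    have h3 : f (a * |p| + b * |q|) < a * f |p| + b * f |q| := by
      have := SC.2 (mem_Ici.2 (abs_nonneg p)) (mem_Ici.2 (abs_nonneg q)) hne ha hb hab
      simpa using this
    calc f (a * p + b * q) ≤ f (a * |p| + b * |q|) := h1 ▸ h2
      _ < a * f |p| + b * f |q| := h3
      _ = a * f p + b * f q := by rw [← fabs p, ← fabs q]
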